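/- Let d ≥ 2, 1 ≤ m ≤ d−1, write x = (x', x'') ∈ ℝ^m × ℝ^{d−m}. Let v : ℝ^d → ℝ^d, p_v : ℝ^d → ℝ be smooth, supported in the closed unit ball, with (v·∇)v + ∇p_v = 0 and div v = 0. Fix S ∈ ℕ, ε ∈ (0,1), k ≥ 1, J ≥ 1; set v_k(x) := ε^{(S+1)(k-1)} v(ε^{-k}x), p_k(x) := ε^{2(S+1)(k-1)} p_v(ε^{-k}x). Let y_{1},…,y_{J} ∈ ℝ^m be points such that the images in (ℝ/2πℤ)^m of the closed balls B̄(y_j, 2ε^k) ⊂ ℝ^m are pairwise disjoint, let ν_1,…,ν_J ∈ ℝ^{d−m}, and let χ : ℝ → [0,1] be smooth, even, with χ = 1 on (−ε^k, ε^k) and χ = 0 outside (−2ε^k, 2ε^k). Define, for (t,x) ∈ ℝ × ℝ^d: v̄_j(t,x) := Σ_{q∈ℤ^d} v_k((x'−y_j, x''−ν_j t) + 2πq), p̄_j(t,x) := Σ_{q∈ℤ^d} p_k((x'−y_j, x''−ν_j t) + 2πq), w(x) := (0, Σ_{j=1}^J ν_j χ(dist_{T^m}(x', y_j))), u(t,x)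 := Σ_{j=1}^J v̄_j(t,x) + w(x), P(t,x) := Σ_{j=1}^J p̄_j(t,x). Then u(t,·) and P(t,·) are smooth and 2πℤ^d-periodic for each t, div_x u = 0, and ∂_t u + (u·∇)u + ∇_x P = 0 on ℝ × ℝ^d; moreover for each t the supports of u(t,·) − w and of P(t,·) in one fundamental domain are contained in ⋃_{j=1}^J B̄(y_j, 2ε^k) × ℝ^{d−m} (modulo 2πℤ^d). -/

import Mathlib

noncomputable section

/-- `ℝ^d` with `d = m + n`, written as the Euclidean space over `Fin m ⊕ Fin n`;
the splitting `x = (x', x'') ∈ ℝ^m × ℝ^{d-m}` is by the two summands. -/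
abbrev Sp (m n : ℕ) := EuclideanSpace ℝ (Fin m ⊕ Fin n)

/-- The point `(a, b) ∈ ℝ^m × ℝ^{d-m} = ℝ^d`. -/
def pair (m n : ℕ) (a : Fin m → ℝ) (b : Fin n → ℝ) : Sp m n :=
  (EuclideanSpace.equiv (Fin m ⊕ Fin n) ℝ).symm (Sum.elim a b)

/-- The first group `x'` of coordinates of `x ∈ ℝ^d = ℝ^m × ℝ^{d-m}`. -/
def fst' (m n : ℕ) (x : Sp m n) : Fin m → ℝ := fun i => x (Sum.inl i)

/-- The lattice vector `2πq ∈ 2πℤ^d`, viewed as a point of `ℝ^d`. -/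
def lat (m n : ℕ) (q : Fin m ⊕ Fin n → ℤ) : Sp m n :=
  (EuclideanSpace.equiv (Fin m ⊕ Fin n) ℝ).symm (fun s => 2 * Real.pi * (q s : ℝ))

/-- Distance on the torus `T^m = (ℝ/2πℤ)^m` (quotient of the Euclidean metric on `ℝ^m`)
between the classes of `a, b ∈ ℝ^m`; it decouples coordinatewise. -/
def distT (m : ℕ) (a b : Fin m → ℝ) : ℝ :=
  Real.sqrt (∑ i, dist ((a i : AddCircle (2 * Real.pi))) ((b i : AddCircle (2 * Real.pi))) ^ 2)

/-- The convective derivative `(f·∇)g`, whose `i`-th component is `Σ_j f_j ∂_{x_j} g_i`. -/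
def conv {ι : Type*} [Fintype ι] [DecidableEq ι]
    (f g : EuclideanSpace ℝ ι → EuclideanSpace ℝ ι) (x : EuclideanSpace ℝ ι) :
    EuclideanSpace ℝ ι :=
  ∑ j, f x j • fderiv ℝ g x (EuclideanSpace.single j 1)

/-- The divergence `div f = Σ_j ∂_{x_j} f_j`. -/
def diverg {ι : Type*} [Fintype ι] [DecidableEq ι]
    (f : EuclideanSpace ℝ ι → EuclideanSpace ℝ ι) (x : EuclideanSpace ℝ ι) : ℝ :=
  ∑ j, fderiv ℝ f x (EuclideanSpace.single j 1) j

/-- The gradient `∇p` of a scalar function. -/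
def grad {ι : Type*} [Fintype ι] [DecidableEq ι] (p : EuclideanSpace ℝ ι → ℝ)
    (x : EuclideanSpace ℝ ι) : EuclideanSpace ℝ ι :=
  (EuclideanSpace.equiv ι ℝ).symm (fun i => fderiv ℝ p x (EuclideanSpace.single i 1))

/-- The seminorm `‖f‖_{N,∞} = sup_x ‖D^N f(x)‖`. -/
def snorm {X Y : Type*} [NormedAddCommGroup X] [NormedSpace ℝ X] [NormedAddCommGroup Y]
    [NormedSpace ℝ Y] (N : ℕ) (f : X → Y) : ℝ := ⨆ x, ‖iteratedFDeriv ℝ N f x‖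

/-- Periodization `f̄(x) = Σ_{q∈ℤ^d} f(x + 2πq)`. -/
def per (m n : ℕ) {F : Type*} [AddCommMonoid F] [TopologicalSpace F]
    (f : Sp m n → F) (x : Sp m n) : F :=
  ∑' q : Fin m ⊕ Fin n → ℤ, f (x + lat m n q)

/-- Rescaled profile `v_k(x) := ε^{(S+1)(k-1)} v(ε^{-k}x)` (for `k ≥ 1`). -/
def vsc (m n S : ℕ) (v : Sp m n → Sp m n) (ε : ℝ) (k : ℕ) (z : Sp m n) : Sp m n :=
  ε ^ ((S + 1) * (k - 1)) • v ((ε ^ k)⁻¹ • z)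

/-- Rescaled pressure profile `p_k(x) := ε^{2(S+1)(k-1)} p(ε^{-k}x)` (for `k ≥ 1`). -/
def psc (m n S : ℕ) (p : Sp m n → ℝ) (ε : ℝ) (k : ℕ) (z : Sp m n) : ℝ :=
  ε ^ (2 * (S + 1) * (k - 1)) • p ((ε ^ (k : ℕ))⁻¹ • z)

/-- The shear correction `w(x) = (0, Σ_j ν_j χ(dist_{T^m}(x', y_j)))`. -/
def wblock (m n : ℕ) {J : ℕ} (y : Fin J → Fin m → ℝ)
    (ν : Fin J → EuclideanSpace ℝ (Fin n)) (χ : ℝ → ℝ) (x : Sp m n) : Sp m n :=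
  pair m n 0 (fun i => ∑ j, ν j i * χ (distT m (fst' m n x) (y j)))

/-- The quasi-periodic building block velocity field
`u_k(t,x) = Σ_j Σ_q v_k((x'-y_j, x''-ν_j t) + 2πq) + w(x)`. -/
def ublock (m n S : ℕ) (v : Sp m n → Sp m n) (ε : ℝ) (k : ℕ) {J : ℕ}
    (y : Fin J → Fin m → ℝ) (ν : Fin J → EuclideanSpace ℝ (Fin n)) (χ : ℝ → ℝ)
    (t : ℝ) (x : Sp m n) : Sp m n :=
  (∑ j, per m n (vsc m n S v ε k) (x - pair m n (y j) (fun i => ν j i * t)))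
    + wblock m n y ν χ x

/-- The quasi-periodic building block pressure
`P_k(t,x) = Σ_j Σ_q p_k((x'-y_j, x''-ν_j t) + 2πq)`. -/
def Pblock (m n S : ℕ) (p : Sp m n → ℝ) (ε : ℝ) (k : ℕ) {J : ℕ}
    (y : Fin J → Fin m → ℝ) (ν : Fin J → EuclideanSpace ℝ (Fin n))
    (t : ℝ) (x : Sp m n) : ℝ :=
  ∑ j, per m n (psc m n S p ε k) (x - pair m n (y j) (fun i => ν j i * t))

namespace QPB
open Real Filter Metric

variable {m n : ℕ}

lemma lat_apply (q : Fin m ⊕ Fin n → ℤ) (s) : lat m n q s = 2 * π * q s := rfl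

lemma lat_add (q q' : Fin m ⊕ Fin n → ℤ) : lat m n (q + q') = lat m n q + lat m n q' := by
  ext s
  show 2*π*((q + q') s : ℝ) = 2*π*(q s : ℝ) + 2*π*(q' s : ℝ)
  push_cast [Pi.add_apply]; ring

lemma lat_sub (q q' : Fin m ⊕ Fin n → ℤ) : lat m n (q - q') = lat m n q - lat m n q' := by
  ext s
  show 2*π*((q - q') s : ℝ) = 2*π*(q s : ℝ) - 2*π*(q' s : ℝ)
  push_cast [Pi.sub_apply]; ring

lemma abs_coord_le_norm (x : Sp m n) (s : Fin m ⊕ Fin n) : |x s| ≤ ‖x‖ := by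
  rw [EuclideanSpace.norm_eq]
  have h1 : |x s| = Real.sqrt (‖x s‖^2) := by
    rw [Real.sqrt_sq_eq_abs]; simp [abs_abs]
  rw [h1]
  apply Real.sqrt_le_sqrt
  exact Finset.single_le_sum (f := fun i => ‖x i‖^2) (fun i _ => by positivity) (Finset.mem_univ s)

lemma two_pi_le_norm_lat {q : Fin m ⊕ Fin n → ℤ} (hq : q ≠ 0) : 2*π ≤ ‖lat m n q‖ := by
  obtain ⟨s, hs⟩ : ∃ s, q s ≠ 0 := by
    by_contra h; push_neg at h; exact hq (funext h)
  have h1 : (1:ℝ) ≤ |(q s : ℝ)| := by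
    rw [← Int.cast_abs]; exact_mod_cast Int.one_le_abs hs
  calc 2*π = 2*π*1 := by ring
  _ ≤ 2*π*|(q s : ℝ)| := by nlinarith [pi_pos]
  _ = |lat m n q s| := by rw [lat_apply, abs_mul]; rw [abs_of_pos (by positivity : (0:ℝ) < 2*π)]
  _ ≤ ‖lat m n q‖ := abs_coord_le_norm _ _

lemma per_loc (x₀ : Sp m n) :
    ∃ q₀ : Fin m ⊕ Fin n → ℤ, ∀ {F : Type} [NormedAddCommGroup F] (f : Sp m n → F),
      (∀ z : Sp m n, 1 < ‖z‖ → f z = 0) → ∀ x ∈ Metric.ball x₀ 1,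
      per m n f x = f (x + lat m n q₀) := by
  have pi3 := pi_gt_three
  by_cases hQ : ∃ q, ‖x₀ + lat m n q‖ < 2
  · obtain ⟨q₀, hq₀⟩ := hQ
    refine ⟨q₀, ?_⟩
    intro F _ f hf x hx
    rw [mem_ball, dist_eq_norm] at hx
    refine tsum_eq_single q₀ ?_
    intro q hq
    apply hf
    have key : 2*π ≤ ‖lat m n q - lat m n q₀‖ := by
      rw [← lat_sub]; exact two_pi_le_norm_lat (fun h => hq (by rwa [sub_eq_zero] at h))
    have hdecomp : lat m n q - lat m n q₀ = (x + lat m n q) - ((x - x₀) + (x₀ + lat m n q₀)) := by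
      abel
    have h2 : ‖lat m n q - lat m n q₀‖ ≤ ‖x + lat m n q‖ + (‖x - x₀‖ + ‖x₀ + lat m n q₀‖) := by
      rw [hdecomp]
      exact (norm_sub_le _ _).trans (by gcongr; exact norm_add_le _ _)
    linarith
  · push_neg at hQ
    refine ⟨0, ?_⟩
    intro F _ f hf x hx
    rw [mem_ball, dist_eq_norm] at hx
    have hall : ∀ q, f (x + lat m n q) = 0 := by
      intro q
      apply hf
      have := hQ q
      have h2 : ‖x₀ + lat m n q‖ ≤ ‖x - x₀‖ + ‖x + lat m n q‖ := by
        have : x₀ + lat m n q = -(x - x₀) + (x + lat m n q) := by abel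
        rw [this]
        exact (norm_add_le _ _).trans (by rw [norm_neg])
      linarith
    rw [per, tsum_eq_single 0 (fun q _ => hall q), hall 0]

lemma per_eventuallyEq (x : Sp m n) :
    ∃ q₀ : Fin m ⊕ Fin n → ℤ, ∀ {F : Type} [NormedAddCommGroup F] (f : Sp m n → F),
      (∀ z : Sp m n, 1 < ‖z‖ → f z = 0) →
      per m n f =ᶠ[nhds x] (fun z => f (z + lat m n q₀)) := by
  obtain ⟨q₀, h⟩ := per_loc (m := m) (n := n) x
  refine ⟨q₀, fun f hf => ?_⟩
  filter_upwards [Metric.ball_mem_nhds x one_pos] with z hz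
  exact h f hf z hz

lemma per_periodic {F : Type*} [AddCommMonoid F] [TopologicalSpace F]
    (f : Sp m n → F) (x : Sp m n) (q : Fin m ⊕ Fin n → ℤ) :
    per m n f (x + lat m n q) = per m n f x := by
  unfold per
  have h1 : ∀ q' : Fin m ⊕ Fin n → ℤ, x + lat m n q + lat m n q' = x + lat m n (q + q') := by
    intro q'; rw [lat_add]; abel
  calc ∑' q', f (x + lat m n q + lat m n q')
      = ∑' q', (fun r => f (x + lat m n r)) ((Equiv.addLeft q) q') := by
        exact tsum_congr fun q' => by rw [h1]; rfl
    _ = ∑' r, f (x + lat m n r) := (Equiv.addLeft q).tsum_eq (fun r => f (x + lat m n r))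

end QPB


namespace QPB
open Real Filter Metric

variable {m n S k : ℕ} {ε : ℝ} {v : Sp m n → Sp m n} {pv : Sp m n → ℝ}

lemma vsc_eq_zero (hsv : tsupport v ⊆ Metric.closedBall 0 1) (hε0 : 0 < ε) {z : Sp m n}
    (hz : ε ^ k < ‖z‖) : vsc m n S v ε k z = 0 := by
  have hek : 0 < ε ^ k := by positivity
  have : (ε ^ k)⁻¹ • z ∉ tsupport v := by
    intro h
    have h2 := hsv h
    rw [Metric.mem_closedBall, dist_zero_right, norm_smul, norm_inv, norm_pow,
      Real.norm_eq_abs, abs_of_pos hε0] at h2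
    rw [← le_div_iff₀' (by positivity)] at h2
    simp only [one_div, inv_inv] at h2
    linarith
  rw [vsc, image_eq_zero_of_notMem_tsupport this, smul_zero]

lemma psc_eq_zero (hsp : tsupport pv ⊆ Metric.closedBall 0 1) (hε0 : 0 < ε) {z : Sp m n}
    (hz : ε ^ k < ‖z‖) : psc m n S pv ε k z = 0 := by
  have : (ε ^ k)⁻¹ • z ∉ tsupport pv := by
    intro h
    have h2 := hsp h
    rw [Metric.mem_closedBall, dist_zero_right, norm_smul, norm_inv, norm_pow,
      Real.norm_eq_abs, abs_of_pos hε0] at h2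
    rw [← le_div_iff₀' (by positivity)] at h2
    simp only [one_div, inv_inv] at h2
    linarith
  rw [psc, image_eq_zero_of_notMem_tsupport this, smul_zero]

lemma vsc_contDiff (hv : ContDiff ℝ (⊤ : ℕ∞) v) : ContDiff ℝ (⊤ : ℕ∞) (vsc m n S v ε k) :=
  by unfold vsc; exact (hv.comp (contDiff_id.const_smul ((ε ^ k)⁻¹))).const_smul (ε ^ ((S + 1) * (k - 1)))

lemma psc_contDiff (hp : ContDiff ℝ (⊤ : ℕ∞) pv) : ContDiff ℝ (⊤ : ℕ∞) (psc m n S pv ε k) :=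
  by unfold psc; exact (hp.comp (contDiff_id.const_smul ((ε ^ k)⁻¹))).const_smul (ε ^ (2 * (S + 1) * (k - 1)))

lemma fderiv_scaled_smul {F : Type*} [NormedAddCommGroup F] [NormedSpace ℝ F]
    {g : Sp m n → F} (hg : ContDiff ℝ (⊤ : ℕ∞) g) (c a : ℝ) (z : Sp m n) :
    fderiv ℝ (fun w => c • g (a • w)) z = (c * a) • fderiv ℝ g (a • z) := by
  have hdg : Differentiable ℝ g := hg.differentiable (by simp)
  have hinner : HasFDerivAt (fun w : Sp m n => a • w)
      (a • ContinuousLinearMap.id ℝ (Sp m n)) z := (hasFDerivAt_id z).const_smul a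
  have hcomp : HasFDerivAt (fun w => g (a • w))
      ((fderiv ℝ g (a • z)).comp (a • ContinuousLinearMap.id ℝ (Sp m n))) z :=
    (hdg (a • z)).hasFDerivAt.comp z hinner
  rw [show (fun w => c • g (a • w)) = c • (fun w => g (a • w)) from rfl, (hcomp.const_smul c).fderiv]
  ext w
  simp [smul_smul, mul_comm]

end QPB

namespace QPB
open Real

variable {m n S k : ℕ} {ε : ℝ} {v : Sp m n → Sp m n} {pv : Sp m n → ℝ}

lemma euc_sum_apply {γ : Type*} (s : Finset γ) (w : γ → Sp m n) (t : Fin m ⊕ Fin n) :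
    (∑ j ∈ s, w j) t = ∑ j ∈ s, w j t := by
  induction s using Finset.cons_induction with
  | empty => rfl
  | cons a s ha ih => rw [Finset.sum_cons, Finset.sum_cons, ← ih]; rfl

lemma fderiv_vsc (hv : ContDiff ℝ (⊤ : ℕ∞) v) (z : Sp m n) :
    fderiv ℝ (vsc m n S v ε k) z
      = (ε ^ ((S + 1) * (k - 1)) * (ε ^ k)⁻¹) • fderiv ℝ v ((ε ^ k)⁻¹ • z) :=
  fderiv_scaled_smul hv _ _ z

lemma fderiv_psc (hp : ContDiff ℝ (⊤ : ℕ∞) pv) (z : Sp m n) :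
    fderiv ℝ (psc m n S pv ε k) z
      = (ε ^ (2 * (S + 1) * (k - 1)) * (ε ^ k)⁻¹) • fderiv ℝ pv ((ε ^ k)⁻¹ • z) :=
  fderiv_scaled_smul hp _ _ z

lemma diverg_vsc (hv : ContDiff ℝ (⊤ : ℕ∞) v) (hdiv : ∀ x, diverg v x = 0) (z : Sp m n) :
    diverg (vsc m n S v ε k) z = 0 := by
  unfold diverg
  have h := hdiv ((ε ^ k)⁻¹ • z)
  unfold diverg at h
  calc (∑ j, fderiv ℝ (vsc m n S v ε k) z (EuclideanSpace.single j 1) j)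
      = ∑ j, (ε ^ ((S + 1) * (k - 1)) * (ε ^ k)⁻¹) *
          fderiv ℝ v ((ε ^ k)⁻¹ • z) (EuclideanSpace.single j 1) j := by
        refine Finset.sum_congr rfl fun j _ => ?_
        rw [fderiv_vsc hv]; rfl
    _ = 0 := by rw [← Finset.mul_sum, h, mul_zero]

lemma pow_two_mul (hε : ε ≠ 0) : ε ^ (2 * (S + 1) * (k - 1))
    = ε ^ ((S + 1) * (k - 1)) * ε ^ ((S + 1) * (k - 1)) := by
  rw [← pow_add]; ring_nf

lemma conv_grad_vsc (hv : ContDiff ℝ (⊤ : ℕ∞) v) (hp : ContDiff ℝ (⊤ : ℕ∞) pv)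
    (heuler : ∀ x, conv v v x + grad pv x = 0) (hε : ε ≠ 0) (z : Sp m n) :
    conv (vsc m n S v ε k) (vsc m n S v ε k) z + grad (psc m n S pv ε k) z = 0 := by
  set c : ℝ := ε ^ ((S + 1) * (k - 1)) with hc
  set a : ℝ := (ε ^ k)⁻¹ with ha
  ext t
  have hcomp := congrArg (fun w : Sp m n => w t) (heuler (a • z))
  have hconv : conv v v (a • z) t
      = ∑ s, v (a • z) s * fderiv ℝ v (a • z) (EuclideanSpace.single s 1) t := by
    unfold conv
    rw [euc_sum_apply]
    rfl
  have hgrad : grad pv (a • z) t = fderiv ℝ pv (a • z) (EuclideanSpace.single t 1) := rfl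
  have hcomp' : (∑ s, v (a • z) s * fderiv ℝ v (a • z) (EuclideanSpace.single s 1) t)
      + fderiv ℝ pv (a • z) (EuclideanSpace.single t 1) = 0 := by
    have h2 : conv v v (a • z) t + grad pv (a • z) t = 0 := by
      calc conv v v (a • z) t + grad pv (a • z) t
          = (conv v v (a • z) + grad pv (a • z)) t := rfl
        _ = (0 : Sp m n) t := hcomp
        _ = 0 := rfl
    rw [hconv, hgrad] at h2; exact h2
  have hL : (conv (vsc m n S v ε k) (vsc m n S v ε k) z + grad (psc m n S pv ε k) z) t
      = (∑ s, (c * v (a • z) s) * ((c * a) * fderiv ℝ v (a • z) (EuclideanSpace.single s 1) t))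
        + (ε ^ (2 * (S + 1) * (k - 1)) * a) * fderiv ℝ pv (a • z) (EuclideanSpace.single t 1) := by
    have h1 : (conv (vsc m n S v ε k) (vsc m n S v ε k) z + grad (psc m n S pv ε k) z) t
        = conv (vsc m n S v ε k) (vsc m n S v ε k) z t + grad (psc m n S pv ε k) z t := rfl
    rw [h1]
    congr 1
    · unfold conv
      rw [euc_sum_apply]
      refine Finset.sum_congr rfl fun s _ => ?_
      rw [fderiv_vsc hv]
      rfl
    · show fderiv ℝ (psc m n S pv ε k) z (EuclideanSpace.single t 1) = _
      rw [fderiv_psc hp]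
      rfl
  have h0 : ((0 : Sp m n) t) = 0 := rfl
  rw [hL, h0, pow_two_mul hε]
  calc (∑ s, (c * v (a • z) s) * ((c * a) * fderiv ℝ v (a • z) (EuclideanSpace.single s 1) t))
        + (c * c * a) * fderiv ℝ pv (a • z) (EuclideanSpace.single t 1)
      = (c * c * a) * ((∑ s, v (a • z) s * fderiv ℝ v (a • z) (EuclideanSpace.single s 1) t)
        + fderiv ℝ pv (a • z) (EuclideanSpace.single t 1)) := by
        rw [mul_add, Finset.mul_sum]
        congr 1
        exact Finset.sum_congr rfl fun s _ => by ring
    _ = 0 := by rw [hcomp', mul_zero]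

end QPB


namespace QPB
open Real Filter Metric

variable {m n : ℕ}

lemma circ_norm_le (x : ℝ) : ‖(x : AddCircle (2*π))‖ ≤ |x| := by
  simpa using QuotientAddGroup.norm_mk_le_norm (S := AddSubgroup.zmultiples (2*π)) (m := x)

lemma circ_coe_add_int (x : ℝ) (q : ℤ) :
    ((x + 2*π*q : ℝ) : AddCircle (2*π)) = (x : AddCircle (2*π)) := by
  have h0 : ((2*π*q : ℝ) : AddCircle (2*π)) = 0 := by
    rw [AddCircle.coe_eq_zero_iff]
    exact ⟨q, by push_cast [zsmul_eq_mul]; ring⟩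
  rw [AddCircle.coe_add, h0, add_zero]

lemma circ_dist (a b : ℝ) :
    dist (a : AddCircle (2*π)) (b : AddCircle (2*π)) = ‖((a - b : ℝ) : AddCircle (2*π))‖ := by
  rw [dist_eq_norm]; norm_cast

lemma distT_nonneg (a b : Fin m → ℝ) : 0 ≤ distT m a b := Real.sqrt_nonneg _

lemma circ_dist_le_abs_add (a b : ℝ) (q : ℤ) :
    dist (a : AddCircle (2*π)) (b : AddCircle (2*π)) ≤ |a - b + 2*π*q| := by
  rw [circ_dist, ← circ_coe_add_int (a - b) q]
  exact circ_norm_le _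

lemma distT_le_norm {a b : Fin m → ℝ} {x : Sp m n}
    (h : ∀ i, dist ((a i : AddCircle (2*π))) ((b i : AddCircle (2*π))) ≤ |x (Sum.inl i)|) :
    distT m a b ≤ ‖x‖ := by
  rw [EuclideanSpace.norm_eq, distT]
  apply Real.sqrt_le_sqrt
  calc (∑ i, dist ((a i : AddCircle (2*π))) ((b i : AddCircle (2*π))) ^ 2)
      ≤ ∑ i, ‖x (Sum.inl i)‖ ^ 2 := by
        refine Finset.sum_le_sum fun i _ => ?_
        have := h i
        have hd : (0:ℝ) ≤ dist ((a i : AddCircle (2*π))) ((b i : AddCircle (2*π))) := dist_nonneg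
        rw [Real.norm_eq_abs]
        nlinarith [abs_nonneg (x (Sum.inl i))]
    _ ≤ ∑ s : Fin m ⊕ Fin n, ‖x s‖ ^ 2 := by
        rw [Fintype.sum_sum_type]
        have : (0:ℝ) ≤ ∑ i : Fin n, ‖x (Sum.inr i)‖ ^ 2 := by positivity
        linarith
lemma distT_shift (a b : Fin m → ℝ) (q : Fin m → ℤ) :
    distT m (fun i => a i + 2*π*(q i)) b = distT m a b := by
  unfold distT
  congr 1
  exact Finset.sum_congr rfl fun i _ => by rw [circ_coe_add_int]

lemma continuous_distT (b : Fin m → ℝ) : Continuous fun a : Fin m → ℝ => distT m a b := by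
  apply Real.continuous_sqrt.comp
  apply continuous_finset_sum
  intro i _
  exact (((AddCircle.continuous_mk' (2*π)).comp (continuous_apply i)).dist continuous_const).pow 2

lemma coord_dist_le (a b : Fin m → ℝ) (i : Fin m) :
    dist ((a i : AddCircle (2*π))) ((b i : AddCircle (2*π))) ≤ distT m a b := by
  unfold distT
  have h1 : dist ((a i : AddCircle (2*π))) ((b i : AddCircle (2*π)))
      = Real.sqrt (dist ((a i : AddCircle (2*π))) ((b i : AddCircle (2*π))) ^ 2) := by
    rw [Real.sqrt_sq dist_nonneg]
  rw [h1]
  apply Real.sqrt_le_sqrt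
  exact Finset.single_le_sum (f := fun i => dist ((a i : AddCircle (2*π))) ((b i : AddCircle (2*π))) ^ 2)
    (fun i _ => by positivity) (Finset.mem_univ i)

lemma circ_norm_sq_loc (c₀ : ℝ) (h : ‖(c₀ : AddCircle (2*π))‖ < π) :
    ∃ κ : ℝ, |c₀ - κ| < π ∧ ∀ c : ℝ, |c - κ| < π → ‖(c : AddCircle (2*π))‖ = |c - κ| := by
  refine ⟨round ((2*π)⁻¹ * c₀) * (2*π), ?_, ?_⟩
  · rw [← AddCircle.norm_eq]; exact h
  · intro c hc
    have hcoe : ((c : ℝ) : AddCircle (2*π)) = ((c - round ((2*π)⁻¹ * c₀) * (2*π) : ℝ) : AddCircle (2*π)) := by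
      rw [← circ_coe_add_int (c - round ((2*π)⁻¹ * c₀) * (2*π)) (round ((2*π)⁻¹ * c₀))]
      ring_nf
    rw [hcoe]
    refine (AddCircle.norm_coe_eq_abs_iff _ (by positivity)).2 ?_
    rw [abs_of_pos (by positivity : (0:ℝ) < 2*π)]
    linarith

end QPB

namespace QPB
open Real Filter Metric
variable {m n : ℕ}

lemma chi_eq_one {χ : ℝ → ℝ} (hχs : ContDiff ℝ (⊤ : ℕ∞) χ) {ρ : ℝ} (hρ : 0 < ρ)
    (hχ1 : ∀ r : ℝ, |r| < ρ → χ r = 1) : ∀ r : ℝ, |r| ≤ ρ → χ r = 1 := by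
  have h1 : Set.EqOn χ (fun _ => 1) (Set.Ioo (-ρ) ρ) := fun r hr => hχ1 r (abs_lt.2 ⟨hr.1, hr.2⟩)
  have h2 : Set.EqOn χ (fun _ => 1) (closure (Set.Ioo (-ρ) ρ)) :=
    h1.closure hχs.continuous continuous_const
  intro r hr
  have : r ∈ closure (Set.Ioo (-ρ) ρ) := by
    rw [closure_Ioo (by linarith : -ρ ≠ ρ)]
    exact ⟨by linarith [abs_le.1 hr |>.1], by linarith [abs_le.1 hr |>.2]⟩
  exact h2 this

lemma deriv_chi_eq_zero {χ : ℝ → ℝ} (hχs : ContDiff ℝ (⊤ : ℕ∞) χ) {ρ : ℝ} (hρ : 0 < ρ)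
    (hχ1 : ∀ r : ℝ, |r| < ρ → χ r = 1) : ∀ r : ℝ, |r| ≤ ρ → deriv χ r = 0 := by
  have h1 : Set.EqOn (deriv χ) (fun _ => 0) (Set.Ioo (-ρ) ρ) := by
    intro r hr
    have hev : χ =ᶠ[nhds r] fun _ => 1 := by
      filter_upwards [isOpen_Ioo.mem_nhds hr] with z hz
      exact hχ1 z (abs_lt.2 ⟨hz.1, hz.2⟩)
    rw [hev.deriv_eq, deriv_const]
  have hcd : Continuous (deriv χ) := hχs.continuous_deriv (mod_cast le_top)
  have h2 : Set.EqOn (deriv χ) (fun _ => 0) (closure (Set.Ioo (-ρ) ρ)) :=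
    h1.closure hcd continuous_const
  intro r hr
  have : r ∈ closure (Set.Ioo (-ρ) ρ) := by
    rw [closure_Ioo (by linarith : -ρ ≠ ρ)]
    exact ⟨by linarith [abs_le.1 hr |>.1], by linarith [abs_le.1 hr |>.2]⟩
  exact h2 this

section G
variable {χ : ℝ → ℝ} {ρ : ℝ}

/-- The squared local representation of `χ ∘ distT` near a point of the middle region. -/
lemma g_middle_rep (hχs : ContDiff ℝ (⊤ : ℕ∞) χ) (hρ : 0 < ρ)
    (b : Fin m → ℝ) (a₀ : Fin m → ℝ) (hd0 : 0 < distT m a₀ b) (hdπ : distT m a₀ b < π) :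
    ∃ Q : (Fin m → ℝ) → ℝ, ContDiff ℝ (⊤ : ℕ∞) Q ∧ Q a₀ = (distT m a₀ b)^2 ∧
      (∀ᶠ a in nhds a₀, distT m a b = Real.sqrt (Q a)) := by
  have hκ : ∀ i : Fin m, ∃ κ : ℝ, |a₀ i - b i - κ| < π ∧
      ∀ c : ℝ, |c - κ| < π → ‖((c : ℝ) : AddCircle (2*π))‖ = |c - κ| := by
    intro i
    apply circ_norm_sq_loc
    have h1 : ‖((a₀ i - b i : ℝ) : AddCircle (2*π))‖
        = dist ((a₀ i : AddCircle (2*π))) ((b i : AddCircle (2*π))) := (circ_dist _ _).symm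
    rw [h1]
    exact lt_of_le_of_lt (coord_dist_le a₀ b i) hdπ
  choose κ hκ1 hκ2 using hκ
  refine ⟨fun a => ∑ i, (a i - b i - κ i)^2, ?_, ?_, ?_⟩
  · apply ContDiff.sum
    intro i _
    have hp : ContDiff ℝ (⊤ : ℕ∞) (fun a : Fin m → ℝ => a i) :=
      (ContinuousLinearMap.proj i : (Fin m → ℝ) →L[ℝ] ℝ).contDiff
    exact ((hp.sub contDiff_const).sub contDiff_const).pow 2
  · unfold distT
    rw [Real.sq_sqrt (by positivity)]
    refine Finset.sum_congr rfl fun i _ => ?_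
    rw [circ_dist, hκ2 i _ (hκ1 i), sq_abs]
  · have hopen : IsOpen {a : Fin m → ℝ | ∀ i, |a i - b i - κ i| < π} := by
      have : {a : Fin m → ℝ | ∀ i, |a i - b i - κ i| < π}
          = ⋂ i, {a : Fin m → ℝ | |a i - b i - κ i| < π} := by ext a; simp
      rw [this]
      apply isOpen_iInter_of_finite
      intro i
      have : Continuous fun a : Fin m → ℝ => |a i - b i - κ i| :=
        (((continuous_apply i).sub continuous_const).sub continuous_const).abs
      exact isOpen_lt this continuous_const
    filter_upwards [hopen.mem_nhds (fun i => hκ1 i)] with a ha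
    unfold distT
    congr 1
    refine Finset.sum_congr rfl fun i _ => ?_
    rw [circ_dist, hκ2 i _ (ha i), sq_abs]

lemma g_props (hχs : ContDiff ℝ (⊤ : ℕ∞) χ) (hρ : 0 < ρ) (hρπ : 2*ρ < π)
    (hχ1 : ∀ r : ℝ, |r| < ρ → χ r = 1) (hχ0 : ∀ r : ℝ, 2*ρ < |r| → χ r = 0)
    (b : Fin m → ℝ) :
    ContDiff ℝ (⊤ : ℕ∞) (fun a : Fin m → ℝ => χ (distT m a b)) ∧
    (∀ a, distT m a b ≤ ρ → fderiv ℝ (fun a : Fin m → ℝ => χ (distT m a b)) a = 0) ∧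
    (∀ a, 2*ρ < distT m a b → (fun a : Fin m → ℝ => χ (distT m a b)) =ᶠ[nhds a] fun _ => 0) := by
  have habs : ∀ a : Fin m → ℝ, |distT m a b| = distT m a b := fun a => abs_of_nonneg (distT_nonneg a b)
  have hev0 : ∀ a, 2*ρ < distT m a b →
      (fun a : Fin m → ℝ => χ (distT m a b)) =ᶠ[nhds a] fun _ => 0 := by
    intro a ha
    have hopen : IsOpen {a : Fin m → ℝ | 2*ρ < distT m a b} :=
      isOpen_lt continuous_const (continuous_distT b)
    filter_upwards [hopen.mem_nhds ha] with z hz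
    exact hχ0 _ (by rw [habs]; exact hz)
  have hev1 : ∀ a, distT m a b < ρ →
      (fun a : Fin m → ℝ => χ (distT m a b)) =ᶠ[nhds a] fun _ => 1 := by
    intro a ha
    have hopen : IsOpen {a : Fin m → ℝ | distT m a b < ρ} :=
      isOpen_lt (continuous_distT b) continuous_const
    filter_upwards [hopen.mem_nhds ha] with z hz
    exact hχ1 _ (by rw [habs]; exact hz)
  have hmidD : ∀ a₀, ρ ≤ distT m a₀ b → distT m a₀ b ≤ 2*ρ →
      ContDiffAt ℝ (⊤ : ℕ∞) (fun a : Fin m → ℝ => χ (distT m a b)) a₀ ∧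
      DifferentiableAt ℝ (fun a : Fin m → ℝ => distT m a b) a₀ ∧
      fderiv ℝ (fun a : Fin m → ℝ => χ (distT m a b)) a₀
        = deriv χ (distT m a₀ b) • fderiv ℝ (fun a : Fin m → ℝ => distT m a b) a₀ := by
    intro a₀ h1 h2
    obtain ⟨Q, hQs, hQa, hQev⟩ := g_middle_rep hχs hρ b a₀ (lt_of_lt_of_le hρ h1) (by linarith)
    have hQpos : 0 < Q a₀ := by
      rw [hQa]; exact pow_pos (lt_of_lt_of_le hρ h1) 2
    have hDev : (fun a : Fin m → ℝ => distT m a b) =ᶠ[nhds a₀] fun a => Real.sqrt (Q a) := hQev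
    have hsqrtQ : ContDiffAt ℝ (⊤ : ℕ∞) (fun a => Real.sqrt (Q a)) a₀ :=
      (Real.contDiffAt_sqrt hQpos.ne').comp a₀ hQs.contDiffAt
    have hDat : ContDiffAt ℝ (⊤ : ℕ∞) (fun a : Fin m → ℝ => distT m a b) a₀ :=
      hsqrtQ.congr_of_eventuallyEq hDev
    refine ⟨?_, hDat.differentiableAt (by simp), ?_⟩
    · exact (hχs.contDiffAt.comp a₀ hDat)
    · have hd : HasFDerivAt (fun a : Fin m → ℝ => χ (distT m a b))
          (deriv χ (distT m a₀ b) • fderiv ℝ (fun a : Fin m → ℝ => distT m a b) a₀) a₀ := by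
        have hder : HasDerivAt χ (deriv χ (distT m a₀ b)) (distT m a₀ b) :=
          ((hχs.differentiable (by simp)) (distT m a₀ b)).hasDerivAt
        have hDf : HasFDerivAt (fun a : Fin m → ℝ => distT m a b)
            (fderiv ℝ (fun a : Fin m → ℝ => distT m a b) a₀) a₀ :=
          (hDat.differentiableAt (by simp)).hasFDerivAt
        exact hder.comp_hasFDerivAt a₀ hDf
      exact hd.fderiv
  refine ⟨?_, ?_, hev0⟩
  · rw [contDiff_iff_contDiffAt]
    intro a₀
    rcases lt_or_ge (distT m a₀ b) ρ with h | h
    · exact (contDiffAt_const (c := 1)).congr_of_eventuallyEq (hev1 a₀ h)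
    rcases le_or_gt (distT m a₀ b) (2*ρ) with h2 | h2
    · exact (hmidD a₀ h h2).1
    · exact (contDiffAt_const (c := 0)).congr_of_eventuallyEq (hev0 a₀ h2)
  · intro a ha
    rcases lt_or_eq_of_le ha with h | h
    · rw [(hev1 a h).fderiv_eq]
      exact fderiv_const_apply 1
    · obtain ⟨_, _, hfd⟩ := hmidD a (le_of_eq h.symm) (by linarith)
      rw [hfd, h, deriv_chi_eq_zero hχs hρ hχ1 ρ (by rw [abs_of_pos hρ]), zero_smul]
end G
end QPB


namespace QPB

open Real Filter Metric

variable {m n : ℕ}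

def projL (m n : ℕ) : Sp m n →L[ℝ] (Fin m → ℝ) :=
  (ContinuousLinearMap.pi fun i => ContinuousLinearMap.proj (Sum.inl i)).comp
    (EuclideanSpace.equiv (Fin m ⊕ Fin n) ℝ).toContinuousLinearMap

def inrL (m n : ℕ) : (Fin n → ℝ) →L[ℝ] Sp m n :=
  ((EuclideanSpace.equiv (Fin m ⊕ Fin n) ℝ).symm.toContinuousLinearMap).comp
    (ContinuousLinearMap.pi fun s : Fin m ⊕ Fin n =>
      Sum.elim (fun _ => (0 : (Fin n → ℝ) →L[ℝ] ℝ))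
        (fun i => ContinuousLinearMap.proj i) s)

lemma projL_eq_fst' (x : Sp m n) : projL m n x = fst' m n x := rfl

lemma inrL_pair (b : Fin n → ℝ) : inrL m n b = pair m n 0 b := by
  ext s; cases s <;> rfl

lemma inrL_apply_inl (b : Fin n → ℝ) (i : Fin m) : inrL m n b (Sum.inl i) = 0 := rfl

lemma projL_single_inr (i : Fin n) :
    projL m n (EuclideanSpace.single (Sum.inr i) (1:ℝ)) = 0 := by
  funext i'
  show (EuclideanSpace.single (Sum.inr i) (1:ℝ)) (Sum.inl i') = 0
  rw [EuclideanSpace.single_apply]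
  simp

variable {J : ℕ} {y : Fin J → Fin m → ℝ} {ν : Fin J → EuclideanSpace ℝ (Fin n)} {χ : ℝ → ℝ} {ρ : ℝ}

/-- inner scalar pi-map of `wblock`. -/
def Wi (m : ℕ) (n : ℕ) (y : Fin J → Fin m → ℝ) (ν : Fin J → EuclideanSpace ℝ (Fin n)) (χ : ℝ → ℝ)
    (a : Fin m → ℝ) : Fin n → ℝ := fun i => ∑ j, ν j i * χ (distT m a (y j))

lemma wblock_eq (x : Sp m n) :
    wblock m n y ν χ x = inrL m n (Wi m n y ν χ (projL m n x)) := by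
  rw [inrL_pair]; rfl

section props
variable (hχs : ContDiff ℝ (⊤ : ℕ∞) χ) (hρ : 0 < ρ) (hρπ : 2*ρ < π)
  (hχ1 : ∀ r : ℝ, |r| < ρ → χ r = 1) (hχ0 : ∀ r : ℝ, 2*ρ < |r| → χ r = 2*0)

lemma Wi_contDiff (hχs : ContDiff ℝ (⊤ : ℕ∞) χ) (hρ : 0 < ρ) (hρπ : 2*ρ < π)
    (hχ1 : ∀ r : ℝ, |r| < ρ → χ r = 1) (hχ0 : ∀ r : ℝ, 2*ρ < |r| → χ r = 0) :
    ContDiff ℝ (⊤ : ℕ∞) (Wi m n y ν χ) := by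
  apply contDiff_pi.2
  intro i
  apply ContDiff.sum
  intro j _
  exact contDiff_const.mul (g_props hχs hρ hρπ hχ1 hχ0 (y j)).1

lemma wblock_contDiff (hχs : ContDiff ℝ (⊤ : ℕ∞) χ) (hρ : 0 < ρ) (hρπ : 2*ρ < π)
    (hχ1 : ∀ r : ℝ, |r| < ρ → χ r = 1) (hχ0 : ∀ r : ℝ, 2*ρ < |r| → χ r = 0) :
    ContDiff ℝ (⊤ : ℕ∞) (wblock m n y ν χ) := by
  have h : wblock m n y ν χ = fun x => inrL m n (Wi m n y ν χ (projL m n x)) :=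
    funext fun x => wblock_eq x
  rw [h]
  exact (inrL m n).contDiff.comp ((Wi_contDiff hχs hρ hρπ hχ1 hχ0).comp (projL m n).contDiff)

lemma wblock_apply_inl (x : Sp m n) (i : Fin m) : wblock m n y ν χ x (Sum.inl i) = 0 := rfl

lemma wblock_shift (x : Sp m n) (q : Fin m ⊕ Fin n → ℤ) :
    wblock m n y ν χ (x + lat m n q) = wblock m n y ν χ x := by
  unfold wblock
  have h2 : ∀ j, distT m (fst' m n (x + lat m n q)) (y j) = distT m (fst' m n x) (y j) := by
    intro j
    have h : fst' m n (x + lat m n q) = fun i => fst' m n x i + 2*π*(q (Sum.inl i)) := rfl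
    rw [h, distT_shift]
  simp only [h2]

lemma wblock_value (hχs : ContDiff ℝ (⊤ : ℕ∞) χ) (hρ : 0 < ρ)
    (hχ1 : ∀ r : ℝ, |r| < ρ → χ r = 1) (hχ0 : ∀ r : ℝ, 2*ρ < |r| → χ r = 0)
    (hy : ∀ j j' : Fin J, j ≠ j' → ∀ a : Fin m → ℝ,
      ¬(distT m a (y j) ≤ 2 * ρ ∧ distT m a (y j') ≤ 2 * ρ))
    (x : Sp m n) (j : Fin J) (hj : distT m (fst' m n x) (y j) ≤ ρ) :
    wblock m n y ν χ x = pair m n 0 (fun i => ν j i) := by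
  unfold wblock
  have h1 : (fun i => ∑ j', ν j' i * χ (distT m (fst' m n x) (y j')))
      = fun i => ν j i := by
    funext i
    rw [Finset.sum_eq_single j]
    · rw [chi_eq_one hχs hρ hχ1 _ (by rwa [abs_of_nonneg (distT_nonneg _ _)]), mul_one]
    · intro j' _ hj'
      have hfar : ¬(distT m (fst' m n x) (y j') ≤ 2*ρ ∧ distT m (fst' m n x) (y j) ≤ 2*ρ) :=
        hy j' j hj' (fst' m n x)
      have h2 : 2*ρ < distT m (fst' m n x) (y j') := by
        by_contra hcon
        push_neg at hcon
        exact hfar ⟨hcon, le_trans hj (by linarith)⟩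
      rw [hχ0 _ (by rwa [abs_of_nonneg (distT_nonneg _ _)]), mul_zero]
    · intro h; exact absurd (Finset.mem_univ j) h
  rw [h1]

lemma wblock_hasFDerivAt (hχs : ContDiff ℝ (⊤ : ℕ∞) χ) (hρ : 0 < ρ) (hρπ : 2*ρ < π)
    (hχ1 : ∀ r : ℝ, |r| < ρ → χ r = 1) (hχ0 : ∀ r : ℝ, 2*ρ < |r| → χ r = 0) (x : Sp m n) :
    HasFDerivAt (wblock m n y ν χ)
      (((inrL m n).comp (fderiv ℝ (Wi m n y ν χ) (projL m n x))).comp (projL m n)) x := by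
  have h : wblock m n y ν χ = fun x => inrL m n (Wi m n y ν χ (projL m n x)) :=
    funext fun x => wblock_eq x
  rw [h]
  have hWd : DifferentiableAt ℝ (Wi m n y ν χ) (projL m n x) :=
    ((Wi_contDiff hχs hρ hρπ hχ1 hχ0).differentiable (by simp)).differentiableAt
  exact ((inrL m n).hasFDerivAt.comp _ hWd.hasFDerivAt).comp x (projL m n).hasFDerivAt

lemma wblock_fderiv_apply_inl (hχs : ContDiff ℝ (⊤ : ℕ∞) χ) (hρ : 0 < ρ) (hρπ : 2*ρ < π)
    (hχ1 : ∀ r : ℝ, |r| < ρ → χ r = 1) (hχ0 : ∀ r : ℝ, 2*ρ < |r| → χ r = 0) (x ξ : Sp m n)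
    (i : Fin m) : fderiv ℝ (wblock m n y ν χ) x ξ (Sum.inl i) = 0 := by
  rw [(wblock_hasFDerivAt hχs hρ hρπ hχ1 hχ0 x).fderiv]
  rfl

lemma wblock_fderiv_single_inr (hχs : ContDiff ℝ (⊤ : ℕ∞) χ) (hρ : 0 < ρ) (hρπ : 2*ρ < π)
    (hχ1 : ∀ r : ℝ, |r| < ρ → χ r = 1) (hχ0 : ∀ r : ℝ, 2*ρ < |r| → χ r = 0) (x : Sp m n)
    (i : Fin n) : fderiv ℝ (wblock m n y ν χ) x (EuclideanSpace.single (Sum.inr i) (1:ℝ)) = 0 := by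
  rw [(wblock_hasFDerivAt hχs hρ hρπ hχ1 hχ0 x).fderiv]
  show inrL m n (fderiv ℝ (Wi m n y ν χ) (projL m n x) (projL m n (EuclideanSpace.single (Sum.inr i) (1:ℝ)))) = 0
  rw [projL_single_inr, map_zero, map_zero]

lemma wblock_fderiv_zero (hχs : ContDiff ℝ (⊤ : ℕ∞) χ) (hρ : 0 < ρ) (hρπ : 2*ρ < π)
    (hχ1 : ∀ r : ℝ, |r| < ρ → χ r = 1) (hχ0 : ∀ r : ℝ, 2*ρ < |r| → χ r = 0)
    (hy : ∀ j j' : Fin J, j ≠ j' → ∀ a : Fin m → ℝ,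
      ¬(distT m a (y j) ≤ 2 * ρ ∧ distT m a (y j') ≤ 2 * ρ))
    (x : Sp m n) (j : Fin J) (hj : distT m (fst' m n x) (y j) ≤ ρ) :
    fderiv ℝ (wblock m n y ν χ) x = 0 := by
  rw [(wblock_hasFDerivAt hχs hρ hρπ hχ1 hχ0 x).fderiv]
  have hWfd : fderiv ℝ (Wi m n y ν χ) (projL m n x) = 0 := by
    have hdiffc : ∀ (i : Fin n), DifferentiableAt ℝ (fun a => ∑ j, ν j i * χ (distT m a (y j)))
        (projL m n x) := by
      intro i
      apply DifferentiableAt.fun_sum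
      intro j _
      exact (differentiableAt_const _).mul
        (((g_props hχs hρ hρπ hχ1 hχ0 (y j)).1.differentiable (by simp)).differentiableAt)
    have hpi : fderiv ℝ (Wi m n y ν χ) (projL m n x)
        = ContinuousLinearMap.pi (fun i => fderiv ℝ (fun a => ∑ j, ν j i * χ (distT m a (y j)))
            (projL m n x)) := by
      apply fderiv_pi hdiffc
    rw [hpi]
    have hzero : ∀ i : Fin n, fderiv ℝ (fun a => ∑ j, ν j i * χ (distT m a (y j)))
        (projL m n x) = 0 := by
      intro i
      rw [fderiv_fun_sum (A := fun j a => ν j i * χ (distT m a (y j))) (fun j _ => ((differentiableAt_const _).mul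
        (((g_props hχs hρ hρπ hχ1 hχ0 (y j)).1.differentiable (by simp)).differentiableAt)))]
      refine Finset.sum_eq_zero fun j' _ => ?_
      have hgd : DifferentiableAt ℝ (fun a => χ (distT m a (y j'))) (projL m n x) :=
        ((g_props hχs hρ hρπ hχ1 hχ0 (y j')).1.differentiable (by simp)).differentiableAt
      rw [fderiv_const_mul hgd]
      rcases eq_or_ne j' j with rfl | hne
      · rw [(g_props hχs hρ hρπ hχ1 hχ0 (y j')).2.1 _ (by rw [← projL_eq_fst']  at hj; exact hj),
          smul_zero]
      · have hfar : 2*ρ < distT m (projL m n x) (y j') := by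
          have := hy j' j hne (fst' m n x)
          by_contra hcon
          push_neg at hcon
          rw [projL_eq_fst'] at hcon
          exact this ⟨hcon, le_trans hj (by linarith)⟩
        rw [((g_props hχs hρ hρπ hχ1 hχ0 (y j')).2.2 _ hfar).fderiv_eq, fderiv_const_apply,
          smul_zero]
    have : (fun i => fderiv ℝ (fun a => ∑ j, ν j i * χ (distT m a (y j))) (projL m n x))
        = fun _ => 0 := funext hzero
    rw [this]
    ext ξ i
    rfl
  rw [hWfd]
  ext ξ s
  show inrL m n ((0 : (Fin m → ℝ) →L[ℝ] (Fin n → ℝ)) (projL m n ξ)) s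
      = (0 : Sp m n →L[ℝ] Sp m n) ξ s
  rw [ContinuousLinearMap.zero_apply, map_zero, ContinuousLinearMap.zero_apply]

end props
end QPB


namespace QPB
open Real Filter Metric

variable {m n : ℕ}

lemma fderiv_translate {F : Type*} [NormedAddCommGroup F] [NormedSpace ℝ F] {f : Sp m n → F}
    (hf : Differentiable ℝ f) (d x : Sp m n) :
    fderiv ℝ (fun z => f (z + d)) x = fderiv ℝ f (x + d) := by
  have h : HasFDerivAt (fun z : Sp m n => f (z + d)) (fderiv ℝ f (x + d)) x := by
    have h1 : HasFDerivAt (fun z : Sp m n => z + d) (ContinuousLinearMap.id ℝ (Sp m n)) x :=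
      (hasFDerivAt_id x).add_const d
    have h2 := (hf (x + d)).hasFDerivAt.comp x h1
    rwa [ContinuousLinearMap.comp_id] at h2
  exact h.fderiv

lemma fderiv_translate_sub {F : Type*} [NormedAddCommGroup F] [NormedSpace ℝ F] {f : Sp m n → F}
    (hf : Differentiable ℝ f) (d x : Sp m n) :
    fderiv ℝ (fun z => f (z - d)) x = fderiv ℝ f (x - d) := by
  have h : (fun z : Sp m n => f (z - d)) = fun z => f (z + (-d)) := by
    funext z; rw [sub_eq_add_neg]
  rw [h, fderiv_translate hf (-d) x, sub_eq_add_neg]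

lemma per_contDiff {F : Type} [NormedAddCommGroup F] [NormedSpace ℝ F] {f : Sp m n → F}
    (hf : ContDiff ℝ (⊤ : ℕ∞) f) (h0 : ∀ z : Sp m n, 1 < ‖z‖ → f z = 0) :
    ContDiff ℝ (⊤ : ℕ∞) (per m n f) := by
  rw [contDiff_iff_contDiffAt]
  intro x
  obtain ⟨q₀, h⟩ := per_eventuallyEq (m := m) (n := n) x
  exact ((hf.comp (contDiff_id.add contDiff_const)).contDiffAt).congr_of_eventuallyEq (h f h0)

lemma per_loc_all (x : Sp m n) :
    ∃ q₀ : Fin m ⊕ Fin n → ℤ, ∀ {F : Type} [NormedAddCommGroup F] [NormedSpace ℝ F]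
      (f : Sp m n → F), ContDiff ℝ (⊤ : ℕ∞) f → (∀ z : Sp m n, 1 < ‖z‖ → f z = 0) →
      per m n f x = f (x + lat m n q₀) ∧
      fderiv ℝ (per m n f) x = fderiv ℝ f (x + lat m n q₀) := by
  obtain ⟨q₀, h⟩ := per_eventuallyEq (m := m) (n := n) x
  refine ⟨q₀, ?_⟩
  intro F _ _ f hf h0
  refine ⟨(h f h0).self_of_nhds, ?_⟩
  rw [(h f h0).fderiv_eq, fderiv_translate (hf.differentiable (by simp)) _ x]

lemma per_zero_at {F : Type} [NormedAddCommGroup F] (f : Sp m n → F) (w : Sp m n)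
    (h : ∀ q : Fin m ⊕ Fin n → ℤ, f (w + lat m n q) = 0) : per m n f w = 0 := by
  unfold per
  rw [tsum_congr h, tsum_zero]

lemma euc_decomp (w : Sp m n) : ∑ s, w s • EuclideanSpace.single s (1:ℝ) = w := by
  ext t
  rw [euc_sum_apply]
  have h : ∀ s, (w s • EuclideanSpace.single s (1:ℝ)) t = w s * (if t = s then 1 else 0) := by
    intro s
    show w s * (EuclideanSpace.single s (1:ℝ)) t = _
    rw [EuclideanSpace.single_apply]
  rw [Finset.sum_congr rfl fun s _ => h s]
  simp

lemma pair_inl (a : Fin m → ℝ) (b : Fin n → ℝ) (i : Fin m) :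
    pair m n a b (Sum.inl i) = a i := rfl

lemma pair_split (a : Fin m → ℝ) (b : Fin n → ℝ) (s : ℝ) :
    pair m n a (fun i => b i * s) = pair m n a 0 + s • pair m n 0 b := by
  ext t
  cases t with
  | inl i =>
    show a i = a i + s * 0
    ring
  | inr i =>
    show b i * s = 0 + s * b i
    ring

lemma distT_le_shift {yj : Fin m → ℝ} (x cj : Sp m n) (hc : ∀ i, cj (Sum.inl i) = yj i)
    (q : Fin m ⊕ Fin n → ℤ) :
    distT m (fst' m n x) yj ≤ ‖x - cj + lat m n q‖ := by
  apply distT_le_norm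
  intro i
  have hcomp : (x - cj + lat m n q) (Sum.inl i)
      = fst' m n x i - yj i + 2*π*(q (Sum.inl i)) := by
    show x (Sum.inl i) - cj (Sum.inl i) + 2*π*(q (Sum.inl i)) = _
    rw [hc]
    rfl
  rw [hcomp]
  exact circ_dist_le_abs_add _ _ _

lemma eventually_zero_outside {F : Type} [NormedAddCommGroup F] [NormedSpace ℝ F]
    {f : Sp m n → F} {ρ : ℝ} (h0 : ∀ z : Sp m n, ρ < ‖z‖ → f z = 0) {z : Sp m n}
    (hz : ρ < ‖z‖) : fderiv ℝ f z = 0 ∧ f z = 0 := by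
  have hev : f =ᶠ[nhds z] fun _ => 0 := by
    filter_upwards [(isOpen_lt continuous_const continuous_norm).mem_nhds hz] with w hw
    exact h0 w hw
  exact ⟨by rw [hev.fderiv_eq]; exact fderiv_const_apply 0, h0 z hz⟩

end QPB

/-- the quasi-periodic building block of Enciso–Peralta-Salas–Torres de
Lizaur, at scale `ε^k`: the field `u(t,x) = Σ_j v̄_j(t,x) + w(x)` with pressure
`P(t,x) = Σ_j p̄_j(t,x)` is smooth and `2πℤ^d`-periodic in `x`, divergence free, solves
`∂_t u + (u·∇)u + ∇P = 0`, and `u - w`, `P` are supported (mod `2πℤ^d`) in the union of the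
cylinders `B̄(y_j, 2ε^k) × ℝ^{d-m}`. -/
theorem quasiperiodic_building_block
    (m n : ℕ) (hm : 1 ≤ m) (hn : 1 ≤ n)
    (v : Sp m n → Sp m n) (pv : Sp m n → ℝ)
    (hv : ContDiff ℝ (⊤ : ℕ∞) v) (hpv : ContDiff ℝ (⊤ : ℕ∞) pv)
    (hsv : tsupport v ⊆ Metric.closedBall 0 1)
    (hsp : tsupport pv ⊆ Metric.closedBall 0 1)
    (heuler : ∀ x, conv v v x + grad pv x = 0)
    (hdiv : ∀ x, diverg v x = 0)
    (S : ℕ) (ε : ℝ) (hε0 : 0 < ε) (hε1 : ε < 1) (k : ℕ) (hk : 1 ≤ k)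
    (J : ℕ) (hJ : 1 ≤ J) (y : Fin J → Fin m → ℝ)
    (hy : ∀ j j' : Fin J, j ≠ j' → ∀ a : Fin m → ℝ,
      ¬(distT m a (y j) ≤ 2 * ε ^ k ∧ distT m a (y j') ≤ 2 * ε ^ k))
    (ν : Fin J → EuclideanSpace ℝ (Fin n))
    (χ : ℝ → ℝ) (hχs : ContDiff ℝ (⊤ : ℕ∞) χ) (hχe : ∀ r, χ (-r) = χ r)
    (hχm : ∀ r, χ r ∈ Set.Icc (0 : ℝ) 1)
    (hχ1 : ∀ r : ℝ, |r| < ε ^ k → χ r = 1)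
    (hχ0 : ∀ r : ℝ, 2 * ε ^ k < |r| → χ r = 0) :
    let u : ℝ → Sp m n → Sp m n := ublock m n S v ε k y ν χ
    let P : ℝ → Sp m n → ℝ := Pblock m n S pv ε k y ν
    (∀ t, ContDiff ℝ (⊤ : ℕ∞) (u t) ∧ ContDiff ℝ (⊤ : ℕ∞) (P t)) ∧
    (∀ t x q, u t (x + lat m n q) = u t x ∧ P t (x + lat m n q) = P t x) ∧
    (∀ t x, diverg (u t) x = 0) ∧
    (∀ t x, HasDerivAt (fun s => u s x) (-(conv (u t) (u t) x + grad (P t) x)) t) ∧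
    (∀ t x, (∀ j : Fin J, 2 * ε ^ k < distT m (fst' m n x) (y j)) →
      u t x = wblock m n y ν χ x ∧ P t x = 0) := by
  intro u P
  have hπ3 := Real.pi_gt_three
  have hρ : 0 < ε ^ k := pow_pos hε0 k
  have hρ1 : ε ^ k < 1 := pow_lt_one₀ hε0.le hε1 (by omega)
  have hρπ : 2 * ε ^ k < Real.pi := by linarith
  have hv0 : ∀ z : Sp m n, 1 < ‖z‖ → vsc m n S v ε k z = 0 :=
    fun z hz => QPB.vsc_eq_zero hsv hε0 (lt_trans hρ1 hz)
  have hp0 : ∀ z : Sp m n, 1 < ‖z‖ → psc m n S pv ε k z = 0 :=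
    fun z hz => QPB.psc_eq_zero hsp hε0 (lt_trans hρ1 hz)
  have hVk0 : ∀ z : Sp m n, ε ^ k < ‖z‖ → vsc m n S v ε k z = 0 :=
    fun z hz => QPB.vsc_eq_zero hsv hε0 hz
  have hPk0 : ∀ z : Sp m n, ε ^ k < ‖z‖ → psc m n S pv ε k z = 0 :=
    fun z hz => QPB.psc_eq_zero hsp hε0 hz
  have hVks : ContDiff ℝ (⊤ : ℕ∞) (vsc m n S v ε k) := QPB.vsc_contDiff hv
  have hPks : ContDiff ℝ (⊤ : ℕ∞) (psc m n S pv ε k) := QPB.psc_contDiff hpv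
  have hPerV : ContDiff ℝ (⊤ : ℕ∞) (per m n (vsc m n S v ε k)) := QPB.per_contDiff hVks hv0
  have hPerP : ContDiff ℝ (⊤ : ℕ∞) (per m n (psc m n S pv ε k)) := QPB.per_contDiff hPks hp0
  have hVd : Differentiable ℝ (per m n (vsc m n S v ε k)) := hPerV.differentiable (by simp)
  have hPd : Differentiable ℝ (per m n (psc m n S pv ε k)) := hPerP.differentiable (by simp)
  have hw : ContDiff ℝ (⊤ : ℕ∞) (wblock m n y ν χ) := QPB.wblock_contDiff hχs hρ hρπ hχ1 hχ0
  have hwd : Differentiable ℝ (wblock m n y ν χ) := hw.differentiable (by simp)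
  have hu' : ∀ t, u t = fun x => (∑ j, per m n (vsc m n S v ε k)
      (x - pair m n (y j) (fun i => ν j i * t))) + wblock m n y ν χ x := fun t => rfl
  have hP' : ∀ t, P t = fun x => ∑ j, per m n (psc m n S pv ε k)
      (x - pair m n (y j) (fun i => ν j i * t)) := fun t => rfl
  have hdiffj : ∀ (t : ℝ) (j : Fin J) (x : Sp m n), DifferentiableAt ℝ
      (fun z : Sp m n => per m n (vsc m n S v ε k) (z - pair m n (y j) (fun i => ν j i * t))) x :=
    fun t j x => ((hVd.comp (differentiable_id.sub_const _)).differentiableAt)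
  have hdiffjP : ∀ (t : ℝ) (j : Fin J) (x : Sp m n), DifferentiableAt ℝ
      (fun z : Sp m n => per m n (psc m n S pv ε k) (z - pair m n (y j) (fun i => ν j i * t))) x :=
    fun t j x => ((hPd.comp (differentiable_id.sub_const _)).differentiableAt)
  have hfderiv_u : ∀ (t : ℝ) (x : Sp m n), fderiv ℝ (u t) x
      = (∑ j, fderiv ℝ (per m n (vsc m n S v ε k)) (x - pair m n (y j) (fun i => ν j i * t)))
        + fderiv ℝ (wblock m n y ν χ) x := by
    intro t x
    rw [hu' t]
    rw [fderiv_fun_add (DifferentiableAt.fun_sum fun j _ => hdiffj t j x) (hwd x)]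
    congr 1
    rw [fderiv_fun_sum (fun j _ => hdiffj t j x)]
    exact Finset.sum_congr rfl fun j _ => QPB.fderiv_translate_sub hVd _ x
  have hfderiv_P : ∀ (t : ℝ) (x : Sp m n), fderiv ℝ (P t) x
      = ∑ j, fderiv ℝ (per m n (psc m n S pv ε k)) (x - pair m n (y j) (fun i => ν j i * t)) := by
    intro t x
    rw [hP' t]
    rw [fderiv_fun_sum (fun j _ => hdiffjP t j x)]
    exact Finset.sum_congr rfl fun j _ => QPB.fderiv_translate_sub hPd _ x
  have hcinl : ∀ (t : ℝ) (j : Fin J) (i : Fin m),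
      (pair m n (y j) (fun i => ν j i * t)) (Sum.inl i) = y j i := fun t j i => rfl
  have hdistle : ∀ (t : ℝ) (x : Sp m n) (j : Fin J) (q : Fin m ⊕ Fin n → ℤ),
      distT m (fst' m n x) (y j) ≤ ‖x - pair m n (y j) (fun i => ν j i * t) + lat m n q‖ :=
    fun t x j q => QPB.distT_le_shift x _ (hcinl t j) q
  refine ⟨?_, ?_, ?_, ?_, ?_⟩
  · -- smoothness
    intro t
    constructor
    · rw [hu' t]
      exact (ContDiff.sum fun j _ => hPerV.comp (contDiff_id.sub contDiff_const)).add hw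
    · rw [hP' t]
      exact ContDiff.sum fun j _ => hPerP.comp (contDiff_id.sub contDiff_const)
  · -- periodicity
    intro t x q
    constructor
    · show (∑ j, per m n (vsc m n S v ε k)
          ((x + lat m n q) - pair m n (y j) (fun i => ν j i * t))) + wblock m n y ν χ (x + lat m n q)
        = (∑ j, per m n (vsc m n S v ε k) (x - pair m n (y j) (fun i => ν j i * t)))
          + wblock m n y ν χ x
      rw [QPB.wblock_shift]
      congr 1
      refine Finset.sum_congr rfl fun j _ => ?_
      rw [add_sub_right_comm, QPB.per_periodic]
    · show (∑ j, per m n (psc m n S pv ε k)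
          ((x + lat m n q) - pair m n (y j) (fun i => ν j i * t)))
        = ∑ j, per m n (psc m n S pv ε k) (x - pair m n (y j) (fun i => ν j i * t))
      refine Finset.sum_congr rfl fun j _ => ?_
      rw [add_sub_right_comm, QPB.per_periodic]
  · -- divergence
    intro t x
    have hdivper : ∀ w : Sp m n, diverg (per m n (vsc m n S v ε k)) w = 0 := by
      intro w
      obtain ⟨q₀, hq⟩ := QPB.per_loc_all (m := m) (n := n) w
      obtain ⟨_, hfd'⟩ := hq (vsc m n S v ε k) hVks hv0
      have hgoal := QPB.diverg_vsc (S := S) (k := k) (ε := ε) hv hdiv (w + lat m n q₀)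
      unfold diverg at hgoal ⊢
      rw [hfd']
      exact hgoal
    unfold diverg
    have hsplit : ∀ s : Fin m ⊕ Fin n,
        fderiv ℝ (u t) x (EuclideanSpace.single s 1) s
        = (∑ j, fderiv ℝ (per m n (vsc m n S v ε k))
            (x - pair m n (y j) (fun i => ν j i * t)) (EuclideanSpace.single s 1) s)
          + fderiv ℝ (wblock m n y ν χ) x (EuclideanSpace.single s 1) s := by
      intro s
      rw [hfderiv_u t x]
      rw [ContinuousLinearMap.add_apply, ContinuousLinearMap.sum_apply]
      show ((∑ j, fderiv ℝ (per m n (vsc m n S v ε k))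
            (x - pair m n (y j) (fun i => ν j i * t)) (EuclideanSpace.single s 1)) : Sp m n) s
          + fderiv ℝ (wblock m n y ν χ) x (EuclideanSpace.single s 1) s = _
      rw [QPB.euc_sum_apply]
    rw [Finset.sum_congr rfl fun s _ => hsplit s, Finset.sum_add_distrib]
    have h1 : (∑ s : Fin m ⊕ Fin n, ∑ j, fderiv ℝ (per m n (vsc m n S v ε k))
        (x - pair m n (y j) (fun i => ν j i * t)) (EuclideanSpace.single s 1) s) = 0 := by
      rw [Finset.sum_comm]
      refine Finset.sum_eq_zero fun j _ => ?_
      exact hdivper (x - pair m n (y j) (fun i => ν j i * t))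
    have h2 : (∑ s : Fin m ⊕ Fin n,
        fderiv ℝ (wblock m n y ν χ) x (EuclideanSpace.single s 1) s) = 0 := by
      rw [Fintype.sum_sum_type]
      have hinl : ∀ i : Fin m,
          fderiv ℝ (wblock m n y ν χ) x (EuclideanSpace.single (Sum.inl i) 1) (Sum.inl i) = 0 :=
        fun i => QPB.wblock_fderiv_apply_inl hχs hρ hρπ hχ1 hχ0 x _ i
      have hinr : ∀ i : Fin n,
          fderiv ℝ (wblock m n y ν χ) x (EuclideanSpace.single (Sum.inr i) 1) (Sum.inr i) = 0 := by
        intro i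
        rw [QPB.wblock_fderiv_single_inr hχs hρ hρπ hχ1 hχ0 x i]
        rfl
      rw [Finset.sum_congr rfl fun i _ => hinl i, Finset.sum_congr rfl fun i _ => hinr i]
      simp
    rw [h1, h2, add_zero]
  · -- Euler equation
    intro t x
    have hq : ∀ j : Fin J, ∃ q₀ : Fin m ⊕ Fin n → ℤ,
        per m n (vsc m n S v ε k) (x - pair m n (y j) (fun i => ν j i * t))
          = vsc m n S v ε k (x - pair m n (y j) (fun i => ν j i * t) + lat m n q₀)
        ∧ fderiv ℝ (per m n (vsc m n S v ε k)) (x - pair m n (y j) (fun i => ν j i * t))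
          = fderiv ℝ (vsc m n S v ε k) (x - pair m n (y j) (fun i => ν j i * t) + lat m n q₀)
        ∧ fderiv ℝ (per m n (psc m n S pv ε k)) (x - pair m n (y j) (fun i => ν j i * t))
          = fderiv ℝ (psc m n S pv ε k) (x - pair m n (y j) (fun i => ν j i * t) + lat m n q₀) := by
      intro j
      obtain ⟨q₀, h⟩ := QPB.per_loc_all (m := m) (n := n) (x - pair m n (y j) (fun i => ν j i * t))
      obtain ⟨h1, h2⟩ := h (vsc m n S v ε k) hVks hv0
      obtain ⟨_, h4⟩ := h (psc m n S pv ε k) hPks hp0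
      exact ⟨q₀, h1, h2, h4⟩
    choose qj hq1 hq2 hq4 using hq
    set zj : Fin J → Sp m n :=
      fun j => x - pair m n (y j) (fun i => ν j i * t) + lat m n (qj j) with hzjdef
    -- the LHS time derivative
    have hderiv : HasDerivAt (fun s => u s x)
        (∑ j, fderiv ℝ (per m n (vsc m n S v ε k))
          (x - pair m n (y j) (fun i => ν j i * t)) (-(pair m n 0 (fun i => ν j i)))) t := by
      have h1 : ∀ j : Fin J, HasDerivAt
          (fun s : ℝ => per m n (vsc m n S v ε k) (x - pair m n (y j) (fun i => ν j i * s)))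
          (fderiv ℝ (per m n (vsc m n S v ε k)) (x - pair m n (y j) (fun i => ν j i * t))
            (-(pair m n 0 (fun i => ν j i)))) t := by
        intro j
        have hpath : ∀ s : ℝ, x - pair m n (y j) (fun i => ν j i * s)
            = (x - pair m n (y j) 0) - s • pair m n 0 (fun i => ν j i) := by
          intro s
          rw [QPB.pair_split (y j) (fun i => ν j i) s]
          abel
        have h2 : HasDerivAt (fun s : ℝ => (x - pair m n (y j) 0) - s • pair m n 0 (fun i => ν j i))
            (-(pair m n 0 (fun i => ν j i))) t := by
          have h3 : HasDerivAt (fun s : ℝ => s • pair m n 0 (fun i => ν j i))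
              (pair m n 0 (fun i => ν j i)) t := by
            simpa using (hasDerivAt_id t).smul_const (pair m n 0 (fun i => ν j i))
          simpa using h3.const_sub (x - pair m n (y j) 0)
        have h4 : HasDerivAt (fun s : ℝ => per m n (vsc m n S v ε k)
            ((x - pair m n (y j) 0) - s • pair m n 0 (fun i => ν j i)))
            (fderiv ℝ (per m n (vsc m n S v ε k))
              ((x - pair m n (y j) 0) - t • pair m n 0 (fun i => ν j i))
              (-(pair m n 0 (fun i => ν j i)))) t :=
          (hVd _).hasFDerivAt.comp_hasDerivAt t h2
        have h5 : (fun s : ℝ => per m n (vsc m n S v ε k)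
            ((x - pair m n (y j) 0) - s • pair m n 0 (fun i => ν j i)))
            = fun s : ℝ => per m n (vsc m n S v ε k) (x - pair m n (y j) (fun i => ν j i * s)) := by
          funext s; rw [hpath s]
        rw [h5, ← hpath t] at h4
        exact h4
      have hsum := HasDerivAt.fun_sum (u := Finset.univ) (fun j _ => h1 j)
      have := hsum.add_const (wblock m n y ν χ x)
      exact this
    -- key algebraic identity
    have hwpart : (∑ s, u t x s • fderiv ℝ (wblock m n y ν χ) x (EuclideanSpace.single s 1))
        = 0 := by
      by_cases hex : ∃ j, distT m (fst' m n x) (y j) ≤ ε ^ k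
      · obtain ⟨j0, hj0⟩ := hex
        rw [QPB.wblock_fderiv_zero hχs hρ hρπ hχ1 hχ0 hy x j0 hj0]
        refine Finset.sum_eq_zero fun s _ => ?_
        rw [ContinuousLinearMap.zero_apply, smul_zero]
      · push_neg at hex
        have hvz : ∀ j, per m n (vsc m n S v ε k) (x - pair m n (y j) (fun i => ν j i * t)) = 0 :=
          fun j => by rw [hq1 j]; exact hVk0 _ (lt_of_lt_of_le (hex j) (hdistle t x j (qj j)))
        have huinl : ∀ i : Fin m, u t x (Sum.inl i) = 0 := by
          intro i
          show ((∑ j, per m n (vsc m n S v ε k) (x - pair m n (y j) (fun i => ν j i * t)))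
            + wblock m n y ν χ x) (Sum.inl i) = 0
          have ha : ((∑ j, per m n (vsc m n S v ε k) (x - pair m n (y j) (fun i => ν j i * t)))
              + wblock m n y ν χ x) (Sum.inl i)
              = (∑ j, per m n (vsc m n S v ε k) (x - pair m n (y j) (fun i => ν j i * t)))
                  (Sum.inl i) + wblock m n y ν χ x (Sum.inl i) := rfl
          rw [ha, QPB.euc_sum_apply, QPB.wblock_apply_inl, add_zero]
          refine Finset.sum_eq_zero fun j _ => ?_
          rw [hvz j]
          rfl
        rw [Fintype.sum_sum_type]
        have hinlz : ∀ i : Fin m, u t x (Sum.inl i)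
            • fderiv ℝ (wblock m n y ν χ) x (EuclideanSpace.single (Sum.inl i) 1) = 0 :=
          fun i => by rw [huinl i, zero_smul]
        have hinrz : ∀ i : Fin n, u t x (Sum.inr i)
            • fderiv ℝ (wblock m n y ν χ) x (EuclideanSpace.single (Sum.inr i) 1) = 0 :=
          fun i => by rw [QPB.wblock_fderiv_single_inr hχs hρ hρπ hχ1 hχ0 x i, smul_zero]
        rw [Finset.sum_congr rfl fun i _ => hinlz i, Finset.sum_congr rfl fun i _ => hinrz i]
        simp
    have hjid : ∀ j : Fin J,
        (∑ s, u t x s • fderiv ℝ (vsc m n S v ε k) (zj j) (EuclideanSpace.single s 1))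
          + grad (psc m n S pv ε k) (zj j)
        = fderiv ℝ (vsc m n S v ε k) (zj j) (pair m n 0 (fun i => ν j i)) := by
      intro j
      rcases le_or_gt ‖zj j‖ (ε ^ k) with hin | hout
      · -- inside the support ball
        have hdj : distT m (fst' m n x) (y j) ≤ ε ^ k := le_trans (hdistle t x j (qj j)) hin
        have hoth : ∀ j' : Fin J, j' ≠ j →
            per m n (vsc m n S v ε k) (x - pair m n (y j') (fun i => ν j' i * t)) = 0 := by
          intro j' hj'
          rw [hq1 j']
          apply hVk0
          refine lt_of_lt_of_le ?_ (hdistle t x j' (qj j'))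
          have hfar : ¬(distT m (fst' m n x) (y j') ≤ 2 * ε ^ k
              ∧ distT m (fst' m n x) (y j) ≤ 2 * ε ^ k) := hy j' j hj' (fst' m n x)
          by_contra hcon
          push_neg at hcon
          exact hfar ⟨by linarith, by linarith⟩
        have huval : u t x = vsc m n S v ε k (zj j) + pair m n 0 (fun i => ν j i) := by
          show ((∑ j', per m n (vsc m n S v ε k) (x - pair m n (y j') (fun i => ν j' i * t)))
            + wblock m n y ν χ x) = _
          rw [QPB.wblock_value hχs hρ hχ1 hχ0 hy x j hdj]
          congr 1
          rw [Finset.sum_eq_single j (fun j' _ hj' => hoth j' hj') (fun h => absurd (Finset.mem_univ j) h)]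
          exact hq1 j
        have hsplit2 : (∑ s, u t x s • fderiv ℝ (vsc m n S v ε k) (zj j) (EuclideanSpace.single s 1))
            = (∑ s, vsc m n S v ε k (zj j) s
                • fderiv ℝ (vsc m n S v ε k) (zj j) (EuclideanSpace.single s 1))
              + ∑ s, (pair m n 0 (fun i => ν j i)) s
                • fderiv ℝ (vsc m n S v ε k) (zj j) (EuclideanSpace.single s 1) := by
          rw [← Finset.sum_add_distrib]
          refine Finset.sum_congr rfl fun s _ => ?_
          rw [huval]
          show (vsc m n S v ε k (zj j) s + (pair m n 0 (fun i => ν j i)) s) • _ = _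
          rw [add_smul]
        have hB : (∑ s, (pair m n 0 (fun i => ν j i)) s
              • fderiv ℝ (vsc m n S v ε k) (zj j) (EuclideanSpace.single s 1))
            = fderiv ℝ (vsc m n S v ε k) (zj j) (pair m n 0 (fun i => ν j i)) := by
          conv_rhs => rw [← QPB.euc_decomp (pair m n 0 (fun i => ν j i))]
          rw [map_sum]
          exact Finset.sum_congr rfl fun s _ => by rw [ContinuousLinearMap.map_smul]
        have heul := QPB.conv_grad_vsc (S := S) (k := k) hv hpv heuler (ne_of_gt hε0) (zj j)
        have hconv : conv (vsc m n S v ε k) (vsc m n S v ε k) (zj j)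
            = ∑ s, vsc m n S v ε k (zj j) s
              • fderiv ℝ (vsc m n S v ε k) (zj j) (EuclideanSpace.single s 1) := rfl
        rw [hsplit2, hB]
        rw [← hconv]
        have : conv (vsc m n S v ε k) (vsc m n S v ε k) (zj j)
            + fderiv ℝ (vsc m n S v ε k) (zj j) (pair m n 0 (fun i => ν j i))
            + grad (psc m n S pv ε k) (zj j)
            = (conv (vsc m n S v ε k) (vsc m n S v ε k) (zj j) + grad (psc m n S pv ε k) (zj j))
              + fderiv ℝ (vsc m n S v ε k) (zj j) (pair m n 0 (fun i => ν j i)) := by abel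
        rw [this, heul, zero_add]
      · -- outside the support ball
        have hfz : fderiv ℝ (vsc m n S v ε k) (zj j) = 0 :=
          (QPB.eventually_zero_outside hVk0 hout).1
        have hpz : fderiv ℝ (psc m n S pv ε k) (zj j) = 0 :=
          (QPB.eventually_zero_outside hPk0 hout).1
        have hgz : grad (psc m n S pv ε k) (zj j) = 0 := by
          ext i
          show fderiv ℝ (psc m n S pv ε k) (zj j) (EuclideanSpace.single i 1) = _
          rw [hpz]
          rfl
        rw [hfz, hgz]
        simp
    have hgradP : grad (P t) x = ∑ j, grad (psc m n S pv ε k) (zj j) := by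
      ext i
      rw [QPB.euc_sum_apply]
      show fderiv ℝ (P t) x (EuclideanSpace.single i 1) = _
      rw [hfderiv_P t x, ContinuousLinearMap.sum_apply]
      exact Finset.sum_congr rfl fun j _ => by rw [hq4 j]; rfl
    have hkey : conv (u t) (u t) x + grad (P t) x
        = ∑ j, fderiv ℝ (per m n (vsc m n S v ε k))
            (x - pair m n (y j) (fun i => ν j i * t)) (pair m n 0 (fun i => ν j i)) := by
      have hconvu : conv (u t) (u t) x
          = (∑ j, ∑ s, u t x s • fderiv ℝ (vsc m n S v ε k) (zj j) (EuclideanSpace.single s 1))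
            + ∑ s, u t x s • fderiv ℝ (wblock m n y ν χ) x (EuclideanSpace.single s 1) := by
        unfold conv
        calc (∑ s, u t x s • fderiv ℝ (u t) x (EuclideanSpace.single s 1))
            = ∑ s, ((∑ j, u t x s • fderiv ℝ (vsc m n S v ε k) (zj j) (EuclideanSpace.single s 1))
                + u t x s • fderiv ℝ (wblock m n y ν χ) x (EuclideanSpace.single s 1)) := by
              refine Finset.sum_congr rfl fun s _ => ?_
              rw [hfderiv_u t x, ContinuousLinearMap.add_apply, ContinuousLinearMap.sum_apply,
                smul_add, Finset.smul_sum]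
              congr 1
              exact Finset.sum_congr rfl fun j _ => by rw [hq2 j]
          _ = (∑ s, ∑ j, u t x s • fderiv ℝ (vsc m n S v ε k) (zj j) (EuclideanSpace.single s 1))
                + ∑ s, u t x s • fderiv ℝ (wblock m n y ν χ) x (EuclideanSpace.single s 1) :=
              Finset.sum_add_distrib
          _ = _ := by rw [Finset.sum_comm]
      rw [hconvu, hwpart, add_zero, hgradP, ← Finset.sum_add_distrib]
      refine Finset.sum_congr rfl fun j _ => ?_
      rw [hq2 j]
      exact hjid j
    have hfinal : (∑ j, fderiv ℝ (per m n (vsc m n S v ε k))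
          (x - pair m n (y j) (fun i => ν j i * t)) (-(pair m n 0 (fun i => ν j i))))
        = -(conv (u t) (u t) x + grad (P t) x) := by
      rw [hkey]
      rw [← Finset.sum_neg_distrib]
      exact Finset.sum_congr rfl fun j _ => map_neg _ _
    rw [hfinal] at hderiv
    exact hderiv
  · -- support
    intro t x hfar
    constructor
    · show ((∑ j, per m n (vsc m n S v ε k) (x - pair m n (y j) (fun i => ν j i * t)))
          + wblock m n y ν χ x) = wblock m n y ν χ x
      have hz : ∀ j : Fin J,
          per m n (vsc m n S v ε k) (x - pair m n (y j) (fun i => ν j i * t)) = 0 := by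
        intro j
        apply QPB.per_zero_at
        intro q
        apply hVk0
        have := hdistle t x j q
        have h2 := hfar j
        linarith
      rw [Finset.sum_congr rfl fun j _ => hz j]
      simp
    · show (∑ j, per m n (psc m n S pv ε k) (x - pair m n (y j) (fun i => ν j i * t))) = 0
      have hz : ∀ j : Fin J,
          per m n (psc m n S pv ε k) (x - pair m n (y j) (fun i => ν j i * t)) = 0 := by
        intro j
        apply QPB.per_zero_at
        intro q
        apply hPk0
        have := hdistle t x j q
        have h2 := hfar j
        linarith
      rw [Finset.sum_congr rfl fun j _ => hz j]
      simp
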